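/- For any forecast sequence p_{1:T} and outcome sequence y_{1:T} ∈ {0,1}^T, the binned refinement R(p_{1:T}) is upper bounded by the unbinned Brier score plus ε²/4 + ε: R(p_{1:T}) ≤ (1/T)∑_t(y_t − p_t)² + ε²/4 + ε, where the bins have width ε. -/

import Mathlib

open scoped Classical

/-- The index of the width-`1/m` bin containing `x` (last bin for `x = 1`). -/
noncomputable def binOf (m : ℕ) (hm : 0 < m) (x : ℝ) : Fin m :=
  ⟨min ⌊x * m⌋₊ (m - 1), lt_of_le_of_lt (min_le_right _ _) (Nat.sub_lt hm one_pos)⟩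

/-- Number of forecasts falling in bin `b`. -/
noncomputable def NbBin {T : ℕ} (m : ℕ) (hm : 0 < m) (p : Fin T → ℝ) (b : Fin m) : ℕ :=
  (Finset.univ.filter (fun t => binOf m hm (p t) = b)).card

/-- Average outcome in bin `b` (0 if the bin is empty). -/
noncomputable def yhatBin {T : ℕ} (m : ℕ) (hm : 0 < m) (p y : Fin T → ℝ) (b : Fin m) : ℝ :=
  if 0 < NbBin m hm p b then
    (∑ t ∈ Finset.univ.filter (fun t => binOf m hm (p t) = b), y t) / (NbBin m hm p b : ℝ)
  else 0

/-- Binned refinement. -/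
noncomputable def RefnBin {T : ℕ} (m : ℕ) (hm : 0 < m) (p y : Fin T → ℝ) : ℝ :=
  (1 / (T : ℝ)) * ∑ b : Fin m,
    (NbBin m hm p b : ℝ) * (yhatBin m hm p y b) * (1 - yhatBin m hm p y b)

lemma binOf_bounds (m : ℕ) (hm : 0 < m) (x : ℝ) (hx : x ∈ Set.Icc (0:ℝ) 1) :
    (((binOf m hm x : Fin m) : ℕ) : ℝ) / m ≤ x ∧
    x ≤ ((((binOf m hm x : Fin m) : ℕ) : ℝ) + 1) / m := by
  obtain ⟨hx0, hx1⟩ := hx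
  have hm' : (0:ℝ) < m := Nat.cast_pos.mpr hm
  have hxm : 0 ≤ x * m := by positivity
  unfold binOf
  by_cases h : x * m < m
  · have hlt : ⌊x * m⌋₊ < m := (Nat.floor_lt hxm).mpr (by exact_mod_cast h)
    have hfl : ⌊x * m⌋₊ ≤ m - 1 := by omega
    have hb : min ⌊x * m⌋₊ (m - 1) = ⌊x * m⌋₊ := min_eq_left hfl
    constructor
    · simp only [hb]
      rw [div_le_iff₀ hm']
      exact Nat.floor_le hxm
    · simp only [hb]
      rw [le_div_iff₀ hm']
      exact (Nat.lt_floor_add_one (x*m)).le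
  · push_neg at h
    have hge : m ≤ ⌊x * m⌋₊ := Nat.le_floor (by exact_mod_cast h)
    have hb : min ⌊x * m⌋₊ (m - 1) = m - 1 := min_eq_right (by omega)
    have hc : ((m - 1 : ℕ) : ℝ) = (m : ℝ) - 1 := by
      push_cast [Nat.cast_sub hm]
      ring
    have hx1' : x = 1 := by nlinarith
    constructor
    · simp only [hb, hc]
      rw [div_le_iff₀ hm']
      nlinarith
    · simp only [hb, hc]
      rw [le_div_iff₀ hm']
      nlinarith

lemma binOf_mid (m : ℕ) (hm : 0 < m) (x : ℝ) (hx : x ∈ Set.Icc (0:ℝ) 1) :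
    |x - ((((binOf m hm x : Fin m) : ℕ) : ℝ) + 1/2) / m| ≤ (m : ℝ)⁻¹ / 2 := by
  obtain ⟨h1, h2⟩ := binOf_bounds m hm x hx
  have hm' : (0:ℝ) < m := Nat.cast_pos.mpr hm
  set B : ℝ := (((binOf m hm x : Fin m) : ℕ) : ℝ)
  have e1 : (B + 1/2) / m = B / m + 1 / (2 * m) := by field_simp
  have e2 : (B + 1) / m = B / m + 1 / m := by field_simp
  have e3 : (m:ℝ)⁻¹ / 2 = 1 / (2 * m) := by
    field_simp
  have h4 : 1 / (m:ℝ) = 1 / (2 * m) + 1 / (2 * m) := by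
    field_simp
    ring
  rw [e2] at h2
  rw [abs_le, e1, e3]
  constructor <;> linarith

/-- Brier-score–refinement lemma: binned refinement is at most the unbinned
Brier score plus `ε²/4 + ε`, where `ε = 1/m` is the bin width. -/
theorem refinement_le_brier_add (T m : ℕ) (hT : 0 < T) (hm : 0 < m)
    (p y : Fin T → ℝ)
    (hp : ∀ t, p t ∈ Set.Icc (0 : ℝ) 1)
    (hy : ∀ t, y t = 0 ∨ y t = 1) :
    RefnBin m hm p y ≤
      (1 / (T : ℝ)) * ∑ t, (y t - p t) ^ 2 + ((m : ℝ)⁻¹) ^ 2 / 4 + (m : ℝ)⁻¹ := by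
  set ε : ℝ := (m : ℝ)⁻¹ with hε
  have hm' : (0:ℝ) < m := Nat.cast_pos.mpr hm
  have hε0 : 0 < ε := by positivity
  have hT' : (0:ℝ) < T := Nat.cast_pos.mpr hT
  have key : ∑ b : Fin m, (NbBin m hm p b : ℝ) * yhatBin m hm p y b * (1 - yhatBin m hm p y b)
      ≤ ∑ t, ((y t - p t) ^ 2 + (ε ^ 2 / 4 + ε)) := by
    rw [← Finset.sum_fiberwise Finset.univ (fun t => binOf m hm (p t))
      (fun t => (y t - p t) ^ 2 + (ε ^ 2 / 4 + ε))]
    apply Finset.sum_le_sum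
    intro b _
    set S := Finset.univ.filter (fun t => binOf m hm (p t) = b) with hS
    by_cases hN : 0 < NbBin m hm p b
    · set c : ℝ := (((b : ℕ) : ℝ) + 1/2) / m with hc
      have hn : (0:ℝ) < (NbBin m hm p b : ℝ) := Nat.cast_pos.mpr hN
      set n : ℝ := (NbBin m hm p b : ℝ) with hnd
      set s : ℝ := ∑ t ∈ S, y t with hsd
      have hyhat : yhatBin m hm p y b = s / n := by
        rw [yhatBin, if_pos hN]
      -- per-element bound with midpoint
      have hstep : ∀ t ∈ S, (y t - c) ^ 2 ≤ (y t - p t) ^ 2 + (ε ^ 2 / 4 + ε) := by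
        intro t ht
        have hbt : binOf m hm (p t) = b := by
          simpa [hS] using (Finset.mem_filter.mp ht).2
        have hmid : |p t - c| ≤ ε / 2 := by
          have := binOf_mid m hm (p t) (hp t)
          rw [hbt] at this
          simpa [hc, hε] using this
        have hyp : |y t - p t| ≤ 1 := by
          obtain ⟨h0, h1⟩ := hp t
          rcases hy t with h | h <;> rw [h, abs_le] <;> constructor <;> linarith
        have h1 := abs_le.mp hmid
        have h2 := abs_le.mp hyp
        nlinarith [sq_nonneg (p t - c), h1.1, h1.2, h2.1, h2.2, hε0.le,
          mul_le_mul (le_refl (1:ℝ)) hmid (abs_nonneg _) zero_le_one,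
          abs_mul_abs_self (p t - c)]
      -- N ŷ (1-ŷ) = ∑ (y-ŷ)² ≤ ∑ (y-c)²
      have hsumsq : ∑ t ∈ S, (y t) ^ 2 = s := by
        rw [hsd]
        apply Finset.sum_congr rfl
        intro t _
        rcases hy t with h | h <;> rw [h] <;> ring
      have hcard : (S.card : ℝ) = n := by rw [hnd, NbBin, hS]
      have hexpand : ∑ t ∈ S, (y t - c) ^ 2 = s - 2 * c * s + n * c ^ 2 := by
        have : ∀ t ∈ S, (y t - c) ^ 2 = (y t) ^ 2 - 2 * c * (y t) + c ^ 2 :=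
          fun t _ => by ring
        rw [Finset.sum_congr rfl this, Finset.sum_add_distrib, Finset.sum_sub_distrib,
          ← Finset.mul_sum, Finset.sum_const, nsmul_eq_mul, hcard, hsumsq, hsd]
      have hLHS : n * (s / n) * (1 - s / n) = s - s ^ 2 / n := by
        field_simp
      have hvar : s - s ^ 2 / n ≤ s - 2 * c * s + n * c ^ 2 := by
        have h4 : (2 * c * s - n * c ^ 2) * n ≤ s ^ 2 := by nlinarith [sq_nonneg (s - n * c)]
        have : 2 * c * s - n * c ^ 2 ≤ s ^ 2 / n := (le_div_iff₀ hn).mpr h4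
        linarith
      calc n * yhatBin m hm p y b * (1 - yhatBin m hm p y b)
          = s - s ^ 2 / n := by rw [hyhat, hLHS]
        _ ≤ s - 2 * c * s + n * c ^ 2 := hvar
        _ = ∑ t ∈ S, (y t - c) ^ 2 := hexpand.symm
        _ ≤ ∑ t ∈ S, ((y t - p t) ^ 2 + (ε ^ 2 / 4 + ε)) := Finset.sum_le_sum hstep
    · have hN0 : NbBin m hm p b = 0 := Nat.eq_zero_of_not_pos hN
      have hSe : S = ∅ := by
        rw [hS]
        exact Finset.card_eq_zero.mp hN0
      rw [hSe, Finset.sum_empty, hN0]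
      simp
  have hsum : ∑ t, ((y t - p t) ^ 2 + (ε ^ 2 / 4 + ε))
      = (∑ t, (y t - p t) ^ 2) + (T : ℝ) * (ε ^ 2 / 4 + ε) := by
    rw [Finset.sum_add_distrib, Finset.sum_const, Finset.card_univ, Fintype.card_fin,
      nsmul_eq_mul]
  rw [RefnBin]
  have := mul_le_mul_of_nonneg_left key (by positivity : (0:ℝ) ≤ 1 / T)
  rw [hsum] at this
  have heq : (1 / (T:ℝ)) * ((∑ t, (y t - p t) ^ 2) + (T : ℝ) * (ε ^ 2 / 4 + ε))
      = (1 / (T:ℝ)) * ∑ t, (y t - p t) ^ 2 + ε ^ 2 / 4 + ε := by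
    field_simp
    ring
  linarith [heq ▸ this]
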